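/- Let A ⊆ ℝ^d be a nonempty closed affine subspace and p, q ∈ ℝ^d. If a ∈ A minimizes the function a ↦ ‖p − a‖ + ‖q − a‖ over A, and p ∉ A, q ∉ A, then ‖p − a‖ + ‖q − a‖ = ‖p' − q‖ where p' is any point satisfying: ‖p' − b‖ = ‖p − b‖ for all b ∈ A (p' is obtained from p by an isometry fixing A pointwise) and p', a, q are collinear with a between p' and q. Equivalently, there exists an isometry R of ℝ^d fixing A pointwise such that ‖p − a‖ + ‖q − a‖ = ‖R p − q‖ and a lies on the segment [R p, q]. -/

import Mathlib

open RealInnerProductSpace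

/-- First-order optimality: the "force balance" vector is orthogonal to the direction. -/
lemma single_hinge_key (d : ℕ)
    (A : AffineSubspace ℝ (EuclideanSpace ℝ (Fin d)))
    (p q a : EuclideanSpace ℝ (Fin d)) (ha : a ∈ A)
    (hu : p - a ≠ 0) (hv : q - a ≠ 0)
    (hmin : ∀ b ∈ A, ‖p - a‖ + ‖q - a‖ ≤ ‖p - b‖ + ‖q - b‖)
    (z : EuclideanSpace ℝ (Fin d)) (hz : z ∈ A.direction) :
    ⟪‖q - a‖ • (p - a) + ‖p - a‖ • (q - a), z⟫ = 0 := by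
  set u := p - a with hu'
  set v := q - a with hv'
  have hun : (0:ℝ) < ‖u‖ := norm_pos_iff.mpr hu
  have hvn : (0:ℝ) < ‖v‖ := norm_pos_iff.mpr hv
  have hinner : ⟪‖v‖ • u + ‖u‖ • v, z⟫ = ‖v‖ * ⟪u, z⟫ + ‖u‖ * ⟪v, z⟫ := by
    rw [inner_add_left, real_inner_smul_left, real_inner_smul_left]
  by_cases hz0 : z = 0
  · simp [hz0]
  have hzn : (0:ℝ) < ‖z‖ := norm_pos_iff.mpr hz0
  set e : ℝ := ‖v‖ * ⟪u, z⟫ + ‖u‖ * ⟪v, z⟫ with he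
  set D : ℝ := ‖z‖ ^ 2 * (‖u‖ + ‖v‖) with hD
  have hDpos : (0:ℝ) < D := by positivity
  have key : ∀ t : ℝ, 2 * t * e ≤ t ^ 2 * D := by
    intro t
    have hb : a + t • z ∈ A := by
      have := AffineSubspace.vadd_mem_of_mem_direction (A.direction.smul_mem t hz) ha
      simpa [vadd_eq_add, add_comm] using this
    have hm := hmin _ hb
    have hpu : p - (a + t • z) = u - t • z := by rw [hu']; abel
    have hqv : q - (a + t • z) = v - t • z := by rw [hv']; abel
    rw [hpu, hqv] at hm
    have s1 : ‖u - t • z‖ ^ 2 = ‖u‖ ^ 2 - 2 * (t * ⟪u, z⟫) + t ^ 2 * ‖z‖ ^ 2 := by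
      rw [norm_sub_sq_real, real_inner_smul_right, norm_smul]
      simp [mul_pow]
    have s2 : ‖v - t • z‖ ^ 2 = ‖v‖ ^ 2 - 2 * (t * ⟪v, z⟫) + t ^ 2 * ‖z‖ ^ 2 := by
      rw [norm_sub_sq_real, real_inner_smul_right, norm_smul]
      simp [mul_pow]
    have b1 : 2 * ‖u‖ * ‖u - t • z‖ ≤
        (‖u‖ ^ 2 - 2 * (t * ⟪u, z⟫) + t ^ 2 * ‖z‖ ^ 2) + ‖u‖ ^ 2 := by
      nlinarith [sq_nonneg (‖u - t • z‖ - ‖u‖), s1]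
    have b2 : 2 * ‖v‖ * ‖v - t • z‖ ≤
        (‖v‖ ^ 2 - 2 * (t * ⟪v, z⟫) + t ^ 2 * ‖z‖ ^ 2) + ‖v‖ ^ 2 := by
      nlinarith [sq_nonneg (‖v - t • z‖ - ‖v‖), s2]
    rw [he, hD]
    nlinarith [mul_le_mul_of_nonneg_left hm (by positivity : (0:ℝ) ≤ 2 * ‖u‖ * ‖v‖),
      mul_le_mul_of_nonneg_left b1 hvn.le, mul_le_mul_of_nonneg_left b2 hun.le]
  clear_value e D
  have he0 : e = 0 := by
    have h1 := key (e / D)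
    have hDne : D ≠ 0 := ne_of_gt hDpos
    have h2 : (e / D) ^ 2 * D = e ^ 2 / D := by
      field_simp
    have h3 : 2 * (e / D) * e = 2 * (e ^ 2 / D) := by ring
    rw [h3, h2] at h1
    have h4 : e ^ 2 / D ≤ 0 := by linarith
    have h5 : e ^ 2 ≤ 0 := by
      have h6 := mul_le_mul_of_nonneg_right h4 hDpos.le
      rwa [div_mul_cancel₀ _ hDne, zero_mul] at h6
    have h7 : e ^ 2 = 0 := le_antisymm h5 (sq_nonneg e)
    exact pow_eq_zero_iff (two_ne_zero) |>.mp h7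
  rw [hinner]; exact he0

theorem single_hinge_straightening (d : ℕ)
    (A : AffineSubspace ℝ (EuclideanSpace ℝ (Fin d)))
    (hne : (A : Set (EuclideanSpace ℝ (Fin d))).Nonempty)
    (hcl : IsClosed (A : Set (EuclideanSpace ℝ (Fin d))))
    (p q a : EuclideanSpace ℝ (Fin d))
    (hp : p ∉ A) (hq : q ∉ A) (ha : a ∈ A)
    (hmin : ∀ b ∈ A, ‖p - a‖ + ‖q - a‖ ≤ ‖p - b‖ + ‖q - b‖) :
    ∃ R : EuclideanSpace ℝ (Fin d) ≃ᵢ EuclideanSpace ℝ (Fin d),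
      (∀ b ∈ A, R b = b) ∧
      ‖p - a‖ + ‖q - a‖ = ‖R p - q‖ ∧
      a ∈ segment ℝ (R p) q := by
  have hu : p - a ≠ 0 := sub_ne_zero.mpr (fun h => hp (h ▸ ha))
  have hv : q - a ≠ 0 := sub_ne_zero.mpr (fun h => hq (h ▸ ha))
  set u := p - a with hu'
  set v := q - a with hv'
  have hun : (0:ℝ) < ‖u‖ := norm_pos_iff.mpr hu
  have hvn : (0:ℝ) < ‖v‖ := norm_pos_iff.mpr hv
  set c : ℝ := ‖u‖ / ‖v‖ with hc
  have hcpos : 0 < c := div_pos hun hvn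
  have hcv : c * ‖v‖ = ‖u‖ := div_mul_cancel₀ _ hvn.ne'
  set w : EuclideanSpace ℝ (Fin d) := -(c • v) with hw
  have hnw : ‖w‖ = ‖u‖ := by
    rw [hw, norm_neg, norm_smul, Real.norm_eq_abs, abs_of_pos hcpos, hcv]
  set F := Submodule.reflection (ℝ ∙ (u - w))ᗮ with hF
  have hFu : F u = w := Submodule.reflection_sub hnw.symm
  have hFfix : ∀ z ∈ A.direction, F z = z := by
    intro z hz
    refine Submodule.reflection_mem_subspace_eq_self ?_
    rw [Submodule.mem_orthogonal_singleton_iff_inner_right]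
    have hk := single_hinge_key d A p q a ha hu hv hmin z hz
    rw [← hu', ← hv'] at hk
    rw [inner_add_left, real_inner_smul_left, real_inner_smul_left] at hk
    have : (inner ℝ (u - w) z : ℝ) = (1 / ‖v‖) * (‖v‖ * inner ℝ u z + ‖u‖ * inner ℝ v z) := by
      rw [hw, sub_neg_eq_add, inner_add_left, real_inner_smul_left, hc]
      field_simp
    rw [this, hk, mul_zero]
  set R : EuclideanSpace ℝ (Fin d) ≃ᵢ EuclideanSpace ℝ (Fin d) :=
    ((IsometryEquiv.addRight (-a)).trans F.toIsometryEquiv).trans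
      (IsometryEquiv.addRight a) with hR
  have hRx : ∀ x, R x = F (x - a) + a := by
    intro x
    simp [hR, sub_eq_add_neg]
  have hRp : R p = w + a := by rw [hRx, ← hu', hFu]
  refine ⟨R, ?_, ?_, ?_⟩
  · intro b hb
    have hbd := AffineSubspace.vsub_mem_direction hb ha
    rw [vsub_eq_sub] at hbd
    rw [hRx, hFfix _ hbd, sub_add_cancel]
  · have h1 : R p - q = -((c + 1) • v) := by
      rw [hRp, hw, hv']
      module
    rw [h1, norm_neg, norm_smul, Real.norm_eq_abs, abs_of_pos (by linarith), ← hcv]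
    ring
  · have hq' : q = a + v := by rw [hv']; abel
    refine ⟨1 / (c + 1), c / (c + 1), by positivity, by positivity, ?_, ?_⟩
    · field_simp
      ring
    · rw [hRp, hw, hq']
      have hc1 : c + 1 ≠ 0 := by positivity
      match_scalars <;> field_simp <;> ring
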